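/- Let A be a normed ℂ-algebra (with submultiplicative norm), let (S_n)_{n ∈ ℕ} be a sequence of subalgebras of A (each S_n is a linear subspace closed under multiplication, containing 0), and let f : ℕ → ℝ with f(n) > 0 for all n. For a ∈ A define N(a) = ‖a‖ + sup_n f(n)⁻¹ · infDist(a, S_n), with values in [0, ∞]. Then for all a, b ∈ A with N(a) < ∞ and N(b) < ∞, one has N(a·b) ≤ 2 · N(a) · N(b). -/

import Mathlib

open scoped ENNReal

/-- The quasi-locality norm `‖a‖_f = ‖a‖ + sup_n f(n)⁻¹ · infDist(a, S_n)`, with values in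
`[0,∞]`, associated with a decay function `f` and a filtration of "local" sets `S n`. -/
noncomputable def quasiLocalNorm {A : Type*} [NormedRing A] [NormedAlgebra ℂ A]
    (S : ℕ → NonUnitalSubalgebra ℂ A) (f : ℕ → ℝ) (a : A) : ℝ≥0∞ :=
  (‖a‖₊ : ℝ≥0∞) + ⨆ n, ENNReal.ofReal ((f n)⁻¹ * Metric.infDist a (S n : Set A))

lemma key_infDist {A : Type*} [NormedRing A] [NormedAlgebra ℂ A]
    (S : NonUnitalSubalgebra ℂ A) (a b : A) :
    Metric.infDist (a * b) (S : Set A) ≤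
      2 * Metric.infDist a (S : Set A) * ‖b‖ + ‖a‖ * Metric.infDist b (S : Set A) := by
  have hS : (S : Set A).Nonempty := ⟨0, S.zero_mem⟩
  set da := Metric.infDist a (S : Set A) with hda
  set db := Metric.infDist b (S : Set A) with hdb
  have hda0 : 0 ≤ da := Metric.infDist_nonneg
  have hdb0 : 0 ≤ db := Metric.infDist_nonneg
  have hdbb : db ≤ ‖b‖ := by
    have := Metric.infDist_le_dist_of_mem (x := b) S.zero_mem
    simpa [dist_eq_norm] using this
  refine le_of_forall_pos_le_add fun ε hε => ?_
  set C : ℝ := 2 * ‖b‖ + ‖a‖ + da + 2 with hC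
  have hC0 : 0 < C := by positivity
  set δ : ℝ := min 1 (ε / C) with hδ
  have hδ0 : 0 < δ := lt_min one_pos (div_pos hε hC0)
  have hδ1 : δ ≤ 1 := min_le_left _ _
  have hδC : δ * C ≤ ε := by
    rw [← le_div_iff₀ hC0]; exact min_le_right _ _
  obtain ⟨s, hs, hsd⟩ := (Metric.infDist_lt_iff hS).1 (show da < da + δ by linarith)
  obtain ⟨t, ht, htd⟩ := (Metric.infDist_lt_iff hS).1 (show db < db + δ by linarith)
  rw [dist_eq_norm] at hsd htd
  have hst : s * t ∈ (S : Set A) := mul_mem hs ht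
  have h1 : Metric.infDist (a * b) (S : Set A) ≤ ‖a * b - s * t‖ := by
    have := Metric.infDist_le_dist_of_mem (x := a * b) hst
    simpa [dist_eq_norm] using this
  have h2 : ‖a * b - s * t‖ ≤ ‖a - s‖ * ‖b‖ + ‖s‖ * ‖b - t‖ := by
    have heq : a * b - s * t = (a - s) * b + s * (b - t) := by noncomm_ring
    rw [heq]
    exact (norm_add_le _ _).trans (add_le_add (norm_mul_le _ _) (norm_mul_le _ _))
  have h3 : ‖s‖ ≤ ‖a‖ + ‖a - s‖ := by
    calc ‖s‖ = ‖a - (a - s)‖ := by rw [sub_sub_cancel]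
    _ ≤ ‖a‖ + ‖a - s‖ := norm_sub_le _ _
  have hn1 : (0:ℝ) ≤ ‖a - s‖ := norm_nonneg _
  have hn2 : (0:ℝ) ≤ ‖b - t‖ := norm_nonneg _
  have hn3 : (0:ℝ) ≤ ‖b‖ := norm_nonneg _
  have hn4 : (0:ℝ) ≤ ‖a‖ := norm_nonneg _
  have h4 : ‖a - s‖ * ‖b‖ + ‖s‖ * ‖b - t‖ ≤ (da + δ) * ‖b‖ + (‖a‖ + da + δ) * (db + δ) := by
    have : ‖s‖ * ‖b - t‖ ≤ (‖a‖ + da + δ) * (db + δ) := by nlinarith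
    nlinarith
  have h5 : (da + δ) * ‖b‖ + (‖a‖ + da + δ) * (db + δ) ≤ 2 * da * ‖b‖ + ‖a‖ * db + ε := by
    nlinarith [mul_le_mul_of_nonneg_left hdbb hda0, mul_le_mul_of_nonneg_left hdbb (le_of_lt hδ0),
      mul_le_mul_of_nonneg_left hδ1 (le_of_lt hδ0)]
  linarith

theorem stmt9 {A : Type*} [NormedRing A] [NormedAlgebra ℂ A]
    (S : ℕ → NonUnitalSubalgebra ℂ A) (f : ℕ → ℝ) (hf : ∀ n, 0 < f n)
    (a b : A) (ha : quasiLocalNorm S f a < ⊤) (hb : quasiLocalNorm S f b < ⊤) :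
    quasiLocalNorm S f (a * b) ≤ 2 * quasiLocalNorm S f a * quasiLocalNorm S f b := by
  set Da := ⨆ n, ENNReal.ofReal ((f n)⁻¹ * Metric.infDist a (S n : Set A)) with hDa
  set Db := ⨆ n, ENNReal.ofReal ((f n)⁻¹ * Metric.infDist b (S n : Set A)) with hDb
  have hDaT : Da ≠ ⊤ := by
    intro h
    rw [quasiLocalNorm, ← hDa, h] at ha
    simp at ha
  have hDbT : Db ≠ ⊤ := by
    intro h
    rw [quasiLocalNorm, ← hDb, h] at hb
    simp at hb
  set Ca := Da.toReal with hCa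
  set Cb := Db.toReal with hCb
  have hCa0 : 0 ≤ Ca := ENNReal.toReal_nonneg
  have hCb0 : 0 ≤ Cb := ENNReal.toReal_nonneg
  have hboundA : ∀ n, (f n)⁻¹ * Metric.infDist a (S n : Set A) ≤ Ca := fun n => by
    have := le_iSup (fun n => ENNReal.ofReal ((f n)⁻¹ * Metric.infDist a (S n : Set A))) n
    rw [← hDa] at this
    exact (ENNReal.ofReal_le_iff_le_toReal hDaT).1 this
  have hboundB : ∀ n, (f n)⁻¹ * Metric.infDist b (S n : Set A) ≤ Cb := fun n => by
    have := le_iSup (fun n => ENNReal.ofReal ((f n)⁻¹ * Metric.infDist b (S n : Set A))) n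
    rw [← hDb] at this
    exact (ENNReal.ofReal_le_iff_le_toReal hDbT).1 this
  -- pointwise bound on the terms for a * b
  have hterm : ∀ n, (f n)⁻¹ * Metric.infDist (a * b) (S n : Set A)
      ≤ 2 * Ca * ‖b‖ + ‖a‖ * Cb := by
    intro n
    have hfn : 0 < (f n)⁻¹ := inv_pos.2 (hf n)
    have h1 := key_infDist (S n) a b
    have h2 : (f n)⁻¹ * Metric.infDist (a * b) (S n : Set A)
        ≤ (f n)⁻¹ * (2 * Metric.infDist a (S n : Set A) * ‖b‖
          + ‖a‖ * Metric.infDist b (S n : Set A)) :=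
      mul_le_mul_of_nonneg_left h1 hfn.le
    have hA := hboundA n
    have hB := hboundB n
    have h3 : (f n)⁻¹ * (2 * Metric.infDist a (S n : Set A) * ‖b‖
          + ‖a‖ * Metric.infDist b (S n : Set A))
        = 2 * ((f n)⁻¹ * Metric.infDist a (S n : Set A)) * ‖b‖
          + ‖a‖ * ((f n)⁻¹ * Metric.infDist b (S n : Set A)) := by ring
    rw [h3] at h2
    have hn3 : (0:ℝ) ≤ ‖b‖ := norm_nonneg _
    have hn4 : (0:ℝ) ≤ ‖a‖ := norm_nonneg _
    nlinarith
  have hsup : (⨆ n, ENNReal.ofReal ((f n)⁻¹ * Metric.infDist (a * b) (S n : Set A)))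
      ≤ ENNReal.ofReal (2 * Ca * ‖b‖ + ‖a‖ * Cb) :=
    iSup_le fun n => ENNReal.ofReal_le_ofReal (hterm n)
  have hDaeq : Da = ENNReal.ofReal Ca := (ENNReal.ofReal_toReal hDaT).symm
  have hDbeq : Db = ENNReal.ofReal Cb := (ENNReal.ofReal_toReal hDbT).symm
  have hnorm : ∀ x : A, ((‖x‖₊ : ℝ≥0∞)) = ENNReal.ofReal ‖x‖ := fun x =>
    (ENNReal.ofReal_eq_coe_nnreal (norm_nonneg x)).symm
  have hLHS : quasiLocalNorm S f (a * b)
      ≤ ENNReal.ofReal (‖a‖ * ‖b‖ + (2 * Ca * ‖b‖ + ‖a‖ * Cb)) := by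
    rw [quasiLocalNorm, hnorm]
    calc ENNReal.ofReal ‖a * b‖
          + ⨆ n, ENNReal.ofReal ((f n)⁻¹ * Metric.infDist (a * b) (S n : Set A))
        ≤ ENNReal.ofReal (‖a‖ * ‖b‖) + ENNReal.ofReal (2 * Ca * ‖b‖ + ‖a‖ * Cb) :=
          add_le_add (ENNReal.ofReal_le_ofReal (norm_mul_le a b)) hsup
      _ = ENNReal.ofReal (‖a‖ * ‖b‖ + (2 * Ca * ‖b‖ + ‖a‖ * Cb)) := by
          rw [← ENNReal.ofReal_add (by positivity) (by positivity)]
  have hRHS : 2 * quasiLocalNorm S f a * quasiLocalNorm S f b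
      = ENNReal.ofReal (2 * (‖a‖ + Ca) * (‖b‖ + Cb)) := by
    rw [quasiLocalNorm, quasiLocalNorm, ← hDa, ← hDb, hDaeq, hDbeq, hnorm, hnorm]
    rw [← ENNReal.ofReal_add (norm_nonneg a) hCa0, ← ENNReal.ofReal_add (norm_nonneg b) hCb0]
    rw [show (2 : ℝ≥0∞) = ENNReal.ofReal 2 by simp]
    rw [← ENNReal.ofReal_mul (by norm_num), ← ENNReal.ofReal_mul (by positivity)]
  rw [hRHS]
  refine hLHS.trans (ENNReal.ofReal_le_ofReal ?_)
  have hn3 : (0:ℝ) ≤ ‖b‖ := norm_nonneg _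
  have hn4 : (0:ℝ) ≤ ‖a‖ := norm_nonneg _
  nlinarith
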